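/- Assume k is even with k ≥ 2 and p_j > 0 for all j, and let p_min = min_{j} p_j. Then for every w ∈ ℝ^d, Σ_{j=1}^d ( k·p_j·(B(w)^{k−1} w_j − A(w)^{k−1} w*_j) )² ≥ 2·k·p_min·A(w)^{2k−2}·L(w); that is, the squared Euclidean norm of the population gradient satisfies the Polyak–Łojasiewicz-type inequality ‖∇L(w)‖₂² ≥ 2 k p_min A(w)^{2k−2} L(w). -/

import Mathlib

/-- The weighted alignment `A(w) = ∑_j p_j w_j w*_j`. -/
noncomputable def alignA (d : ℕ) (p wstar w : Fin d → ℝ) : ℝ :=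
  ∑ j, p j * w j * wstar j

/-- The weighted norm `B(w) = ∑_j p_j w_j²`. -/
noncomputable def normB (d : ℕ) (p w : Fin d → ℝ) : ℝ :=
  ∑ j, p j * (w j) ^ 2

/-- The population loss `L(w) = (1/2)(B(w)^k − 2 A(w)^k + 1)`. -/
noncomputable def popLoss (d k : ℕ) (p wstar w : Fin d → ℝ) : ℝ :=
  (1 / 2) * ((normB d p w) ^ k - 2 * (alignA d p wstar w) ^ k + 1)

lemma aux_geom (x : ℝ) (hx : 1 ≤ x) (n : ℕ) : x^(n+1) - 1 ≤ ((n:ℝ)+1) * x^n * (x-1) := by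
  induction n with
  | zero => simp
  | succ n ih =>
    have h1 : (1:ℝ) ≤ x^(n+1) := one_le_pow₀ hx
    have h2 : (0:ℝ) ≤ x := by linarith
    have h3 : x*(x^(n+1) - 1) ≤ x*(((n:ℝ)+1)*x^n*(x-1)) := mul_le_mul_of_nonneg_left ih h2
    have h4 : 1*(x-1) ≤ x^(n+1)*(x-1) := mul_le_mul_of_nonneg_right h1 (by linarith)
    have e : x*(((n:ℝ)+1)*x^n*(x-1)) = ((n:ℝ)+1)*x^(n+1)*(x-1) := by ring
    push_cast
    calc x^(n+1+1) - 1 = x*(x^(n+1)-1) + (x-1) := by ring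
      _ ≤ ((n:ℝ)+1)*x^(n+1)*(x-1) + x^(n+1)*(x-1) := by rw [e] at h3; linarith
      _ = ((n:ℝ)+1+1)*x^(n+1)*(x-1) := by ring

lemma keyF (m : ℕ) (C : ℝ) (hC : 1 ≤ C) :
    (((m:ℝ)+2)*C^(m+1) - 1)^2 ≤ ((m:ℝ)+1)*(((m:ℝ)+2)*C^(2*m+3) - C^(m+2)) := by
  have ha : (1:ℝ) ≤ C^m := one_le_pow₀ hC
  have e1 : C^(m+1) = C^m*C := by ring
  have e2 : C^(m+2) = C^m*C^2 := by ring
  have e3 : C^(2*m+3) = (C^m)^2*C^3 := by ring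
  set a := C^m with hadef
  have hS : a*C - 1 ≤ ((m:ℝ)+1)*a*(C-1) := by
    have := aux_geom C hC m; rw [e1] at this; linarith
  have hT : a*C^2 - 1 ≤ ((m:ℝ)+2)*(a*C)*(C-1) := by
    have := aux_geom C hC (m+1); rw [e2] at this
    push_cast at this
    rw [e1] at this; linarith
  rw [e1, e2, e3]
  have haC : (0:ℝ) ≤ a*C - 1 := by nlinarith
  have hM : (0:ℝ) ≤ (m:ℝ) := Nat.cast_nonneg m
  have h4 : 0 ≤ ((m:ℝ)+2)*(a*C-1)*(((m:ℝ)+1)*a*(C-1) - (a*C-1)) := by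
    apply mul_nonneg (mul_nonneg (by linarith) haC); linarith
  have h5 : 0 ≤ ((m:ℝ)+1)*(((m:ℝ)+2)*(a*C)*(C-1) - (a*C^2-1)) := by
    apply mul_nonneg (by linarith); linarith
  have h6 : 0 ≤ ((m:ℝ)+1)*((m:ℝ)+2)*a*(C-1)^2*(a*C-1) := by
    apply mul_nonneg (mul_nonneg (mul_nonneg (mul_nonneg (by linarith) (by linarith)) (by linarith)) (sq_nonneg _)) haC
  nlinarith [h4, h5, h6]

lemma keyP (m : ℕ) (C D : ℝ) (hC : 1 ≤ C) (hD : 0 ≤ D) :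
    D^2*C^(m+2) - 2*D + 1 ≤ ((m:ℝ)+2)*(D^2*C^(2*m+3) - 2*D*C^(m+1) + 1) := by
  have hF := keyF m C hC
  have hM : (0:ℝ) ≤ (m:ℝ) := Nat.cast_nonneg m
  have hp1 : (1:ℝ) ≤ C^(m+1) := one_le_pow₀ hC
  have hp2 : C^(m+2) ≤ C^(2*m+3) := pow_le_pow_right₀ hC (by omega)
  have hp3 : (1:ℝ) ≤ C^(m+2) := one_le_pow₀ hC
  set α := ((m:ℝ)+2)*C^(2*m+3) - C^(m+2) with hαdef
  set β := ((m:ℝ)+2)*C^(m+1) - 1 with hβdef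
  have hα : 0 < α := by
    have : ((m:ℝ)+2)*C^(m+2) ≤ ((m:ℝ)+2)*C^(2*m+3) := by
      apply mul_le_mul_of_nonneg_left hp2 (by linarith)
    nlinarith
  have hβ : 0 ≤ β := by rw [hβdef]; nlinarith
  have key : 0 ≤ D^2*α - 2*D*β + ((m:ℝ)+1) := by
    nlinarith [sq_nonneg (α*D - β), hF, hα]
  rw [hαdef, hβdef] at key
  nlinarith [key]

lemma keyAB (m : ℕ) (hkeven : Even (m+2)) (A B : ℝ) (hAB : A^2 ≤ B) :
    A^(2*m+2) * (B^(m+2) - 2*A^(m+2) + 1)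
      ≤ ((m:ℝ)+2) * (B^(2*m+3) - 2*A^(m+2)*B^(m+1) + A^(2*m+2)) := by
  rcases eq_or_ne A 0 with h|h
  · have hB : 0 ≤ B := by nlinarith [sq_nonneg A]
    rw [h, zero_pow (by omega : 2*m+2 ≠ 0), zero_pow (by omega : m+2 ≠ 0)]
    have hBp : 0 ≤ B^(2*m+3) := by positivity
    have hM : (0:ℝ) ≤ (m:ℝ) := Nat.cast_nonneg m
    nlinarith
  · have hA2 : 0 < A^2 := by positivity
    set C := B/A^2 with hCdef
    have hC : 1 ≤ C := (one_le_div hA2).2 hAB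
    have hBeq : B = C*A^2 := by rw [hCdef, div_mul_cancel₀ B hA2.ne']
    have hD : 0 ≤ A^(m+2) := hkeven.pow_nonneg A
    have hP := keyP m C (A^(m+2)) hC hD
    have hAn : (0:ℝ) ≤ (A^2)^(m+1) := by positivity
    have h2 := mul_le_mul_of_nonneg_left hP hAn
    calc A^(2*m+2) * (B^(m+2) - 2*A^(m+2) + 1)
        = (A^2)^(m+1) * ((A^(m+2))^2*C^(m+2) - 2*A^(m+2) + 1) := by rw [hBeq]; ring
      _ ≤ (A^2)^(m+1) * (((m:ℝ)+2)*((A^(m+2))^2*C^(2*m+3) - 2*A^(m+2)*C^(m+1) + 1)) := h2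
      _ = ((m:ℝ)+2) * (B^(2*m+3) - 2*A^(m+2)*B^(m+1) + A^(2*m+2)) := by rw [hBeq]; ring

/-- Polyak–Łojasiewicz inequality: for `k` even with `k ≥ 2` and `p_j > 0` for all `j`,
the squared norm of the population gradient of the k-multiplicative composition loss
satisfies `‖∇L(w)‖₂² ≥ 2 k p_min A(w)^{2k−2} L(w)`. -/
theorem pl_inequality (d k : ℕ) (hd : 0 < d) (hk : 2 ≤ k) (hkeven : Even k)
    (p : Fin d → ℝ) (hp : ∀ j, 0 < p j) (hp1 : ∑ j, p j = 1)
    (pmin : ℝ) (hpmin : IsLeast (Set.range p) pmin)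
    (wstar : Fin d → ℝ) (hws : ∀ j, wstar j = 1 ∨ wstar j = -1)
    (w : Fin d → ℝ) :
    2 * k * pmin * (alignA d p wstar w) ^ (2 * k - 2) * popLoss d k p wstar w
      ≤ ∑ j, ((k : ℝ) * p j * ((normB d p w) ^ (k - 1) * w j
          - (alignA d p wstar w) ^ (k - 1) * wstar j)) ^ 2 := by
  obtain ⟨m, rfl⟩ : ∃ m, k = m + 2 := ⟨k - 2, by omega⟩
  have ek1 : m + 2 - 1 = m + 1 := by omega
  have ek2 : 2 * (m + 2) - 2 = 2 * m + 2 := by omega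
  rw [ek1, ek2]
  set A := alignA d p wstar w with hA
  set B := normB d p w with hB
  -- pmin facts
  obtain ⟨⟨j0, hj0⟩, hlb⟩ := hpmin
  have hpmin_pos : 0 < pmin := hj0 ▸ hp j0
  have hpmin_le : ∀ j, pmin ≤ p j := fun j => hlb ⟨j, rfl⟩
  -- Cauchy-Schwarz : A^2 ≤ B
  have hws2 : ∀ j, (wstar j)^2 = 1 := by
    intro j; rcases hws j with h|h <;> rw [h] <;> norm_num
  have hCS : A^2 ≤ B := by
    have h := Finset.sum_mul_sq_le_sq_mul_sq Finset.univ
      (fun j => Real.sqrt (p j) * w j) (fun j => Real.sqrt (p j) * wstar j)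
    have e1 : ∀ j : Fin d, (Real.sqrt (p j) * w j) * (Real.sqrt (p j) * wstar j)
        = p j * w j * wstar j := by
      intro j
      have h0 : Real.sqrt (p j) * Real.sqrt (p j) = p j := Real.mul_self_sqrt (hp j).le
      linear_combination (w j * wstar j) * h0
    have e2 : ∀ j : Fin d, (Real.sqrt (p j) * w j)^2 = p j * (w j)^2 := by
      intro j
      have : Real.sqrt (p j) ^ 2 = p j := Real.sq_sqrt (hp j).le
      rw [mul_pow, this]
    have e3 : ∀ j : Fin d, (Real.sqrt (p j) * wstar j)^2 = p j := by
      intro j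
      have h1 : Real.sqrt (p j) ^ 2 = p j := Real.sq_sqrt (hp j).le
      rw [mul_pow, h1, hws2 j, mul_one]
    rw [Finset.sum_congr rfl (fun j _ => e1 j), Finset.sum_congr rfl (fun j _ => e2 j),
      Finset.sum_congr rfl (fun j _ => e3 j), hp1, mul_one] at h
    exact h
  -- step 1 + 2
  set X := B^(m+1) with hX
  set Y := A^(m+1) with hY
  have step2 : ∑ j, p j * (X * w j - Y * wstar j)^2
      = B^(2*m+3) - 2*A^(m+2)*X + A^(2*m+2) := by
    have e : ∀ j : Fin d, p j * (X * w j - Y * wstar j)^2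
        = X^2*(p j * (w j)^2) - 2*(X*Y)*(p j * w j * wstar j) + Y^2 * p j := by
      intro j; rcases hws j with h|h <;> rw [h] <;> ring
    rw [Finset.sum_congr rfl (fun j _ => e j)]
    have eB : (∑ j, p j * (w j)^2) = B := rfl
    have eA : (∑ j, p j * w j * wstar j) = A := rfl
    rw [Finset.sum_add_distrib, Finset.sum_sub_distrib, ← Finset.mul_sum, ← Finset.mul_sum,
      ← Finset.mul_sum, hp1, eB, eA, hX, hY]
    ring
  have step1 : ((m:ℝ)+2)^2 * pmin * ∑ j, p j * (X * w j - Y * wstar j)^2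
      ≤ ∑ j, (((m:ℕ)+2 : ℝ) * p j * (X * w j - Y * wstar j))^2 := by
    rw [Finset.mul_sum]
    apply Finset.sum_le_sum
    intro j _
    have h1 : pmin * p j ≤ p j * p j :=
      mul_le_mul_of_nonneg_right (hpmin_le j) (hp j).le |>.trans_eq (by ring)
    have h2 : (0:ℝ) ≤ (X * w j - Y * wstar j)^2 := sq_nonneg _
    push_cast
    nlinarith [mul_le_mul_of_nonneg_left (mul_le_mul_of_nonneg_right h1 h2) (sq_nonneg ((m:ℝ)+2))]
  have key := keyAB m hkeven A B hCS
  -- final assembly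
  have hcast : ((m:ℕ)+2 : ℝ) = (m:ℝ)+2 := by push_cast; ring
  unfold popLoss
  rw [← hA, ← hB]
  push_cast
  calc 2 * ((m:ℝ)+2) * pmin * A^(2*m+2) * ((1/2) * (B^(m+2) - 2*A^(m+2) + 1))
      = ((m:ℝ)+2) * pmin * (A^(2*m+2) * (B^(m+2) - 2*A^(m+2) + 1)) := by ring
    _ ≤ ((m:ℝ)+2) * pmin * (((m:ℝ)+2) * (B^(2*m+3) - 2*A^(m+2)*B^(m+1) + A^(2*m+2))) := by
        apply mul_le_mul_of_nonneg_left key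
        positivity
    _ = ((m:ℝ)+2)^2 * pmin * (B^(2*m+3) - 2*A^(m+2)*X + A^(2*m+2)) := by rw [hX]; ring
    _ = ((m:ℝ)+2)^2 * pmin * ∑ j, p j * (X * w j - Y * wstar j)^2 := by rw [step2]
    _ ≤ ∑ j, (((m:ℕ)+2 : ℝ) * p j * (X * w j - Y * wstar j))^2 := step1
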